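/- Let p ≥ 1, let h, g ∈ ℝ^p, A ∈ ℝ^{p×p} with I − A − g h^⊤ invertible with inverse M, and set w := M g. Let e_V : Ω → ℝ and e_X : Ω → ℝ^p be centered square-integrable random variables, and define V := h^⊤X + e_V and X := g V + A X + e_X via (V, X^⊤)^⊤ := (I − Ã)^{-1}(e_V, e_X^⊤)^⊤, where Ã is the block matrix [0, h^⊤; g, A]. Set σ² := Var(e_V), v_i := Cov(e_{X,i}, e_V), Σ_{ij} := Cov(e_{X,i}, e_{X,j}), and Σ̃ := Σ + v g^⊤ + g v^⊤. Then: (i) X = w e_V + M e_X almost surely; (ii) Cov(X, X) = σ² w w^⊤ + M Σ̃ M^⊤; and (iii) Cov(X, V) = Cov(X, X) h + σ² w + M v. -/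

import Mathlib

open MeasureTheory Matrix

private lemma memLp_mul_integrable {Ω : Type*} [MeasurableSpace Ω] {μ : Measure Ω}
    {f g : Ω → ℝ} (hf : MemLp f 2 μ) (hg : MemLp g 2 μ) :
    Integrable (fun ω => f ω * g ω) μ := by
  have h := memLp_one_iff_integrable.mp <| hg.smul (φ := f) hf (p := 2) (q := 2) (r := 1)
    (hpqr := ⟨by simp [one_div, ENNReal.inv_two_add_inv_two]⟩)
  simp only [smul_eq_mul] at h
  exact h

/-- For the linear system `V = hᵀ X + e_V`, `X = g V + A X + e_X`
(i.e. `(V, X) = (I − Ã)⁻¹ (e_V, e_X)` with `Ã = [0, hᵀ; g, A]`, encoded via the inverse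
`M` of `I − A − g hᵀ`), with `w = M g`, `σ² = Var(e_V)`, `v = Cov(e_X, e_V)`,
`Σ = Cov(e_X, e_X)`, and `Σ̃ = Σ + v gᵀ + g vᵀ`:
(i) `X = w e_V + M e_X` almost surely;
(ii) `Cov(X, X) = σ² w wᵀ + M Σ̃ Mᵀ`;
(iii) `Cov(X, V) = Cov(X, X) h + σ² w + M v`. -/
theorem stmt_4
    {Ω : Type*} [MeasurableSpace Ω] (μ : Measure Ω) [IsProbabilityMeasure μ]
    (p : ℕ) (hp : 1 ≤ p)
    (h g : Fin p → ℝ) (A : Matrix (Fin p) (Fin p) ℝ)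
    (M : Matrix (Fin p) (Fin p) ℝ)
    (hM₁ : (1 - A - vecMulVec g h) * M = 1)
    (hM₂ : M * (1 - A - vecMulVec g h) = 1)
    (w : Fin p → ℝ) (hw : w = M *ᵥ g)
    (eV : Ω → ℝ) (eX : Ω → Fin p → ℝ)
    (heV : MemLp eV 2 μ) (heX : ∀ i, MemLp (fun ω => eX ω i) 2 μ)
    (heV0 : ∫ ω, eV ω ∂μ = 0) (heX0 : ∀ i, ∫ ω, eX ω i ∂μ = 0)
    (V : Ω → ℝ) (X : Ω → Fin p → ℝ)
    (hV : ∀ ω, V ω = h ⬝ᵥ X ω + eV ω)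
    (hX : ∀ ω, X ω = V ω • g + A *ᵥ X ω + eX ω)
    (σ2 : ℝ) (hσ2 : σ2 = ∫ ω, eV ω * eV ω ∂μ)
    (v : Fin p → ℝ) (hv : ∀ i, v i = ∫ ω, eX ω i * eV ω ∂μ)
    (S : Matrix (Fin p) (Fin p) ℝ) (hS : ∀ i j, S i j = ∫ ω, eX ω i * eX ω j ∂μ)
    (St : Matrix (Fin p) (Fin p) ℝ)
    (hStdef : St = S + vecMulVec v g + vecMulVec g v)
    (CovXX : Matrix (Fin p) (Fin p) ℝ)
    (hCovXX : ∀ i j, CovXX i j = ∫ ω, X ω i * X ω j ∂μ)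
    (CovXV : Fin p → ℝ)
    (hCovXV : ∀ i, CovXV i = ∫ ω, X ω i * V ω ∂μ) :
    (∀ᵐ ω ∂μ, X ω = eV ω • w + M *ᵥ eX ω) ∧
      CovXX = σ2 • vecMulVec w w + M * St * Mᵀ ∧
      CovXV = CovXX *ᵥ h + σ2 • w + M *ᵥ v := by
  -- (i): the identity holds pointwise.
  have hXpt : ∀ ω, X ω = eV ω • w + M *ᵥ eX ω := by
    intro ω
    have h1 : vecMulVec g h *ᵥ X ω = (h ⬝ᵥ X ω) • g := by
      funext i
      simp [vecMulVec_apply, mulVec, dotProduct, Finset.mul_sum, mul_comm, mul_left_comm,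
        mul_assoc]
    have hlin : (1 - A - vecMulVec g h) *ᵥ X ω = eV ω • g + eX ω := by
      rw [sub_mulVec, sub_mulVec, one_mulVec, h1]
      nth_rewrite 1 [hX ω]
      rw [hV ω, add_smul]
      abel
    calc X ω = (M * (1 - A - vecMulVec g h)) *ᵥ X ω := by rw [hM₂, one_mulVec]
      _ = M *ᵥ ((1 - A - vecMulVec g h) *ᵥ X ω) := by rw [mulVec_mulVec]
      _ = eV ω • w + M *ᵥ eX ω := by
          rw [hlin, mulVec_add, mulVec_smul, hw]
  have hXco : ∀ ω i, X ω i = w i * eV ω + ∑ k, M i k * eX ω k := by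
    intro ω i
    rw [hXpt ω]
    simp [mulVec, dotProduct]
    ring
  have hXfun : ∀ i, (fun ω => X ω i) = fun ω => w i * eV ω + ∑ k, M i k * eX ω k :=
    fun i => funext fun ω => hXco ω i
  have hXL2 : ∀ i, MemLp (fun ω => X ω i) 2 μ := by
    intro i
    rw [hXfun i]
    exact (heV.const_mul _).add
      (memLp_finset_sum Finset.univ fun k _ => (heX k).const_mul (M i k))
  -- key linear expansion of covariances against an L² function
  have key : ∀ (f : Ω → ℝ), MemLp f 2 μ → ∀ i,
      ∫ ω, X ω i * f ω ∂μ
        = w i * ∫ ω, eV ω * f ω ∂μ + ∑ k, M i k * ∫ ω, eX ω k * f ω ∂μ := by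
    intro f hf i
    have hre : (fun ω => X ω i * f ω)
        = fun ω => w i * (eV ω * f ω) + ∑ k, M i k * (eX ω k * f ω) := by
      funext ω
      rw [hXco ω i, add_mul, Finset.sum_mul]
      simp [mul_assoc]
    rw [hre, integral_add ((memLp_mul_integrable heV hf).const_mul _)
        (integrable_finset_sum _ fun k _ => (memLp_mul_integrable (heX k) hf).const_mul _),
      integral_const_mul, integral_finset_sum _
        (fun k _ => (memLp_mul_integrable (heX k) hf).const_mul _)]
    simp [integral_const_mul]
  have hXeV : ∀ i, ∫ ω, X ω i * eV ω ∂μ = w i * σ2 + ∑ k, M i k * v k := by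
    intro i
    rw [key eV heV i]
    simp only [hσ2, hv]
  have hSsym : ∀ k l, S k l = S l k := by
    intro k l
    rw [hS, hS]
    congr 1
    funext ω
    ring
  have hXeX : ∀ i k, ∫ ω, X ω i * eX ω k ∂μ = w i * v k + ∑ l, M i l * S l k := by
    intro i k
    rw [key _ (heX k) i]
    have h2 : (fun ω => eV ω * eX ω k) = fun ω => eX ω k * eV ω := by
      funext ω; ring
    rw [h2]
    simp only [hv, hS]
  -- entrywise formula for CovXX
  have hCXXe : ∀ i j, CovXX i j
      = w i * (w j * σ2 + ∑ l, M j l * v l)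
        + ∑ k, M i k * (w j * v k + ∑ l, M j l * S l k) := by
    intro i j
    rw [hCovXX i j, key _ (hXL2 j) i]
    congr 1
    · have h3 : (fun ω => eV ω * X ω j) = fun ω => X ω j * eV ω := by
        funext ω; ring
      rw [h3, hXeV j]
    · refine Finset.sum_congr rfl fun k _ => ?_
      have h4 : (fun ω => eX ω k * X ω j) = fun ω => X ω j * eX ω k := by
        funext ω; ring
      rw [h4, hXeX j k]
  have hvmv : ∀ (a b : Fin p → ℝ), M * vecMulVec a b * Mᵀ = vecMulVec (M *ᵥ a) (M *ᵥ b) := by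
    intro a b
    ext i j
    simp only [Matrix.mul_apply, vecMulVec_apply, Matrix.transpose_apply, mulVec, dotProduct,
      Finset.sum_mul, Finset.mul_sum]
    exact Finset.sum_congr rfl fun k _ => Finset.sum_congr rfl fun l _ => by ring
  have hMS : ∀ i j, (M * S * Mᵀ) i j = ∑ k, M i k * ∑ l, M j l * S l k := by
    intro i j
    simp only [Matrix.mul_apply, Matrix.transpose_apply, Finset.sum_mul, Finset.mul_sum]
    conv_lhs => rw [Finset.sum_comm]
    exact Finset.sum_congr rfl fun k _ => Finset.sum_congr rfl fun l _ => by
      rw [hSsym k l]; ring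
  have hmain : ∀ i j, CovXX i j
      = σ2 * (w i * w j) + (w i * (M *ᵥ v) j + ((M *ᵥ v) i * w j + (M * S * Mᵀ) i j)) := by
    intro i j
    rw [hCXXe i j, hMS i j]
    simp only [mulVec, dotProduct]
    simp only [mul_add, Finset.sum_add_distrib]
    have h5 : ∑ k, M i k * (w j * v k) = (∑ k, M i k * v k) * w j := by
      rw [Finset.sum_mul]
      exact Finset.sum_congr rfl fun k _ => by ring
    rw [h5]
    ring
  have part2 : CovXX = σ2 • vecMulVec w w + M * St * Mᵀ := by
    ext i j
    rw [hmain i j, hStdef, Matrix.mul_add, Matrix.mul_add, Matrix.add_mul, Matrix.add_mul,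
      hvmv v g, hvmv g v, ← hw]
    simp only [Matrix.add_apply, Matrix.smul_apply, vecMulVec_apply, smul_eq_mul]
    ring
  refine ⟨Filter.Eventually.of_forall hXpt, part2, ?_⟩
  -- (iii)
  funext i
  have hIXX : ∀ j, Integrable (fun ω => X ω i * X ω j) μ :=
    fun j => memLp_mul_integrable (hXL2 i) (hXL2 j)
  have hre : (fun ω => X ω i * V ω)
      = fun ω => (∑ j, h j * (X ω i * X ω j)) + X ω i * eV ω := by
    funext ω
    rw [hV ω, mul_add]
    congr 1
    rw [dotProduct, Finset.mul_sum]
    exact Finset.sum_congr rfl fun j _ => by ring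
  rw [hCovXV i, hre, integral_add (integrable_finset_sum _ fun j _ => (hIXX j).const_mul _)
      (memLp_mul_integrable (hXL2 i) heV),
    integral_finset_sum _ (fun j _ => (hIXX j).const_mul _), hXeV i]
  simp only [integral_const_mul, Pi.add_apply, Pi.smul_apply, smul_eq_mul, mulVec, dotProduct,
    hCovXX]
  have h6 : ∑ j, h j * ∫ ω, X ω i * X ω j ∂μ = ∑ j, (∫ ω, X ω i * X ω j ∂μ) * h j :=
    Finset.sum_congr rfl fun j _ => mul_comm _ _
  rw [h6]
  ring
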